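/- Let C be a binary singly even self-dual code of length n ≡ 0 (mod 8), let C_0 be its subcode of codewords of weight divisible by 4, and let S = C_0^⊥ \ C be its shadow. Then every vector in S has weight divisible by 4. -/

import Mathlib

open Finset

def IsDesign (v t k lam : ℕ) (B : Finset (Finset (Fin v))) : Prop :=
  (∀ b ∈ B, b.card = k) ∧
  ∀ T : Finset (Fin v), T.card = t → (B.filter (fun b => T ⊆ b)).card = lam

def IsSelfOrthogonalDesign (v t k lam : ℕ) (B : Finset (Finset (Fin v))) : Prop :=
  IsDesign v t k lam B ∧ ∀ b₁ ∈ B, ∀ b₂ ∈ B, b₁ ≠ b₂ → (b₁ ∩ b₂).card % 2 = k % 2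

def blockVec {v : ℕ} (b : Finset (Fin v)) : Fin v → ZMod 2 := fun i => if i ∈ b then 1 else 0

def designCode (v : ℕ) (B : Finset (Finset (Fin v))) : Submodule (ZMod 2) (Fin v → ZMod 2) :=
  Submodule.span (ZMod 2) (blockVec '' ↑B)

def dualSet {v : ℕ} (C : Set (Fin v → ZMod 2)) : Set (Fin v → ZMod 2) :=
  {y | ∀ x ∈ C, ∑ i, x i * y i = 0}

def codeWt {v : ℕ} (x : Fin v → ZMod 2) : ℕ := (univ.filter fun i => x i ≠ 0).card

noncomputable def numWt {v : ℕ} (C : Submodule (ZMod 2) (Fin v → ZMod 2)) (w : ℕ) : ℕ :=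
  Nat.card {x : Fin v → ZMod 2 // x ∈ C ∧ codeWt x = w}

namespace ShadowAux
open Complex
variable {n : ℕ}


/-- overlap of supports -/
def ovl (x y : Fin n → ZMod 2) : ℕ := (univ.filter fun i => x i ≠ 0 ∧ y i ≠ 0).card

lemma wt_add (x y : Fin n → ZMod 2) :
    codeWt (x + y) + 2 * ovl x y = codeWt x + codeWt y := by
  classical
  set A := univ.filter fun i => x i ≠ 0 with hA
  set B := univ.filter fun i => y i ≠ 0 with hB
  have key : ∀ a b : ZMod 2, (a + b ≠ 0) ↔ ((a ≠ 0 ∨ b ≠ 0) ∧ ¬(a ≠ 0 ∧ b ≠ 0)) := by decide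
  have hsupp : (univ.filter fun i => (x + y) i ≠ 0) = (A ∪ B) \ (A ∩ B) := by
    ext i
    simp only [hA, hB, mem_filter, mem_univ, true_and, mem_sdiff, mem_union, mem_inter,
      Pi.add_apply]
    exact key (x i) (y i)
  have hovl : (A ∩ B) = univ.filter fun i => x i ≠ 0 ∧ y i ≠ 0 := by
    rw [hA, hB, ← Finset.filter_and]
  have h1 : ((A ∪ B) \ (A ∩ B)).card + (A ∩ B).card = (A ∪ B).card :=
    Finset.card_sdiff_add_card_eq_card (Finset.inter_subset_union)
  have h2 := Finset.card_union_add_card_inter A B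
  have hx : codeWt x = A.card := rfl
  have hy : codeWt y = B.card := rfl
  have hxy : codeWt (x + y) = ((A ∪ B) \ (A ∩ B)).card := by rw [codeWt, hsupp]
  have ho : ovl x y = (A ∩ B).card := by rw [ovl, hovl]
  omega

lemma dot_eq_ovl (x y : Fin n → ZMod 2) :
    ∑ i, x i * y i = ((ovl x y : ℕ) : ZMod 2) := by
  classical
  have key : ∀ a b : ZMod 2, a * b = if a ≠ 0 ∧ b ≠ 0 then 1 else 0 := by decide
  rw [ovl, ← Finset.sum_boole]
  exact Finset.sum_congr rfl fun i _ => key (x i) (y i)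

lemma sum_entries (x : Fin n → ZMod 2) : ∑ i, x i = ((codeWt x : ℕ) : ZMod 2) := by
  classical
  have key : ∀ a : ZMod 2, a = if a ≠ 0 then 1 else 0 := by decide
  rw [codeWt, ← Finset.sum_boole]
  exact Finset.sum_congr rfl fun i _ => key (x i)

lemma dot_zero_iff (x y : Fin n → ZMod 2) :
    (∑ i, x i * y i = 0) ↔ 2 ∣ ovl x y := by
  rw [dot_eq_ovl]
  exact ZMod.natCast_eq_zero_iff _ 2

lemma dot_one_odd {x y : Fin n → ZMod 2} (h : ∑ i, x i * y i ≠ 0) :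
    ovl x y % 2 = 1 := by
  have h2 : ¬ (2 ∣ ovl x y) := fun hd => h ((dot_zero_iff x y).mpr hd)
  omega

/-- mod 4 weight of a sum, when the first summand is doubly even and orthogonal -/
lemma wt_add_mod4_e {x y : Fin n → ZMod 2} (hx : codeWt x % 4 = 0)
    (hxy : ∑ i, x i * y i = 0) : codeWt (x + y) % 4 = codeWt y % 4 := by
  have h1 := wt_add x y
  have h2 := (dot_zero_iff x y).mp hxy
  omega

/-- mod 4 weight of a sum, singly even non-orthogonal case -/
lemma wt_add_mod4_o {x y : Fin n → ZMod 2} (hx : codeWt x % 4 = 2)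
    (hxy : ∑ i, x i * y i ≠ 0) : codeWt (x + y) % 4 = codeWt y % 4 := by
  have h1 := wt_add x y
  have h2 := dot_one_odd hxy
  omega


noncomputable def chi (a : ZMod 2) : ℂ := if a = 0 then 1 else -1

lemma chi_zero : chi (0 : ZMod 2) = 1 := by simp [chi]

lemma chi_add (a b : ZMod 2) : chi (a + b) = chi a * chi b := by
  have h : ∀ c : ZMod 2, c = 0 ∨ c = 1 := by decide
  rcases h a with ha | ha <;> rcases h b with hb | hb <;> subst ha <;> subst hb
  · simp [chi]
  · simp [chi]
  · simp [chi]
  · rw [show ((1:ZMod 2) + 1 = 0) by decide, chi_zero]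
    have h1 : chi (1 : ZMod 2) = -1 := by simp [chi]
    rw [h1]; norm_num

lemma chi_sum {ι : Type*} (s : Finset ι) (f : ι → ZMod 2) :
    chi (∑ i ∈ s, f i) = ∏ i ∈ s, chi (f i) := by
  classical
  induction s using Finset.induction_on with
  | empty => simp [chi_zero]
  | insert a s' hi ih => rw [Finset.sum_insert hi, Finset.prod_insert hi, chi_add, ih]

lemma Ipow_of_mod4_eq_zero {w : ℕ} (h : w % 4 = 0) : I ^ w = 1 := by
  obtain ⟨k, rfl⟩ : ∃ k, w = 4 * k := ⟨w / 4, by omega⟩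
  rw [pow_mul, I_pow_four, one_pow]

lemma Ipow_of_mod4_eq_two {w : ℕ} (h : w % 4 = 2) : I ^ w = -1 := by
  obtain ⟨k, rfl⟩ : ∃ k, w = 4 * k + 2 := ⟨w / 4, by omega⟩
  rw [pow_add, pow_mul, I_pow_four, one_pow, one_mul, I_sq]

lemma gauss (u : Fin n → ZMod 2) :
    ∑ y : Fin n → ZMod 2, I ^ codeWt y * chi (∑ i, u i * y i)
      = (1 + I) ^ (n - codeWt u) * (1 - I) ^ codeWt u := by
  classical
  have step1 : ∀ y : Fin n → ZMod 2,
      I ^ codeWt y * chi (∑ i, u i * y i)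
        = ∏ i, ((if y i ≠ 0 then I else 1) * chi (u i * y i)) := by
    intro y
    rw [Finset.prod_mul_distrib, ← chi_sum]
    congr 1
    rw [codeWt, Finset.prod_ite (fun _ => I) (fun _ => (1:ℂ)), Finset.prod_const,
      Finset.prod_const_one, mul_one]
  calc ∑ y : Fin n → ZMod 2, I ^ codeWt y * chi (∑ i, u i * y i)
      = ∑ y : Fin n → ZMod 2, ∏ i, ((if y i ≠ 0 then I else 1) * chi (u i * y i)) := by
        exact Finset.sum_congr rfl fun y _ => step1 y
    _ = ∏ i, ∑ b : ZMod 2, ((if b ≠ 0 then I else 1) * chi (u i * b)) := by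
        rw [Fintype.prod_sum]
    _ = ∏ i, (if u i = 0 then 1 + I else 1 - I) := by
        refine Finset.prod_congr rfl fun i _ => ?_
        have huniv : (Finset.univ : Finset (ZMod 2)) = {0, 1} := by decide
        rw [huniv, Finset.sum_pair (by decide : (0 : ZMod 2) ≠ 1)]
        have h : ∀ c : ZMod 2, c = 0 ∨ c = 1 := by decide
        rcases h (u i) with hu | hu <;> rw [hu]
        · simp [chi]
        · simp [chi]
          ring
    _ = (1 + I) ^ (n - codeWt u) * (1 - I) ^ codeWt u := by
        rw [Finset.prod_ite (fun _ => (1+I)) (fun _ => (1-I)), Finset.prod_const,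
          Finset.prod_const]
        have h2 : (univ.filter fun i => ¬ u i = 0).card = codeWt u := rfl
        have h1 := Finset.card_filter_add_card_filter_not
          (s := (univ : Finset (Fin n))) (p := fun i => u i = 0)
        simp only [Finset.card_univ, Fintype.card_fin] at h1
        rw [h2] at h1
        rw [h2, show (univ.filter fun i => u i = 0).card = n - codeWt u by omega]

/-- character-sum orthogonality -/
lemma orth (D : Finset (Fin n → ZMod 2))
    (hDadd : ∀ a ∈ D, ∀ b ∈ D, a + b ∈ D) (y : Fin n → ZMod 2) :
    ∑ u ∈ D, chi (∑ i, u i * y i)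
      = if (∀ x ∈ D, ∑ i, x i * y i = 0) then (D.card : ℂ) else 0 := by
  classical
  split_ifs with hP
  · rw [Finset.sum_congr rfl fun u hu => by rw [hP u hu, chi_zero]]
    simp
  · push_neg at hP
    obtain ⟨u₀, hu₀D, hu₀⟩ := hP
    have hself : ∀ a : ZMod 2, a + a = 0 := by decide
    have hinv : ∀ u : Fin n → ZMod 2, u + u₀ + u₀ = u := by
      intro u; funext i; simp [add_assoc, hself]
    set S := ∑ u ∈ D, chi (∑ i, u i * y i) with hS
    have hre : S = ∑ u ∈ D, chi (∑ i, (u + u₀) i * y i) := by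
      rw [hS]
      refine Finset.sum_nbij' (fun u => u + u₀) (fun u => u + u₀) ?_ ?_ ?_ ?_ ?_ <;>
        intro u hu
      · exact hDadd u hu u₀ hu₀D
      · exact hDadd u hu u₀ hu₀D
      · exact hinv u
      · exact hinv u
      · simp [add_assoc, hself]
    have hexp : ∀ u : Fin n → ZMod 2,
        chi (∑ i, (u + u₀) i * y i) = chi (∑ i, u i * y i) * chi (∑ i, u₀ i * y i) := by
      intro u
      rw [← chi_add]
      congr 1
      rw [← Finset.sum_add_distrib]
      exact Finset.sum_congr rfl fun i _ => by simp [Pi.add_apply, add_mul]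
    have hchiu₀ : chi (∑ i, u₀ i * y i) = -1 := by simp [chi, hu₀]
    have : S = -S := by
      calc S = ∑ u ∈ D, chi (∑ i, (u + u₀) i * y i) := hre
        _ = ∑ u ∈ D, chi (∑ i, u i * y i) * chi (∑ i, u₀ i * y i) :=
            Finset.sum_congr rfl fun u _ => hexp u
        _ = ∑ u ∈ D, -chi (∑ i, u i * y i) := by simp [hchiu₀]
        _ = -S := by simp [hS]
    have h2 : S + S = 0 := by nth_rewrite 2 [this]; ring
    exact add_self_eq_zero.mp h2


lemma Ipow_neg_of_mod4_eq_zero {w : ℕ} (h : w % 4 = 0) : (-I) ^ w = 1 := by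
  obtain ⟨k, rfl⟩ : ∃ k, w = 4 * k := ⟨w / 4, by omega⟩
  rw [pow_mul, show (-I)^4 = 1 by rw [show (-I)^4 = I^4 by ring, I_pow_four], one_pow]

lemma poisson (D : Finset (Fin n → ZMod 2))
    (hDadd : ∀ a ∈ D, ∀ b ∈ D, a + b ∈ D)
    (hwt : ∀ x ∈ D, codeWt x % 4 = 0) :
    (∑ y ∈ univ.filter (fun y => ∀ x ∈ D, ∑ i, x i * y i = 0), I ^ codeWt y) * (D.card : ℂ)
      = (1 + I) ^ n * (D.card : ℂ) := by
  classical
  have hwle : ∀ u : Fin n → ZMod 2, codeWt u ≤ n := by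
    intro u
    have := Finset.card_filter_le (univ : Finset (Fin n)) (fun i => u i ≠ 0)
    simpa [codeWt] using this
  calc (∑ y ∈ univ.filter (fun y => ∀ x ∈ D, ∑ i, x i * y i = 0), I ^ codeWt y) * (D.card : ℂ)
      = ∑ y ∈ univ.filter (fun y => ∀ x ∈ D, ∑ i, x i * y i = 0), I ^ codeWt y * (D.card : ℂ) := by
        rw [Finset.sum_mul]
    _ = ∑ y : Fin n → ZMod 2,
          (if (∀ x ∈ D, ∑ i, x i * y i = 0) then I ^ codeWt y * (D.card : ℂ) else 0) := by
        rw [Finset.sum_filter]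
    _ = ∑ y : Fin n → ZMod 2, I ^ codeWt y * (if (∀ x ∈ D, ∑ i, x i * y i = 0)
          then (D.card : ℂ) else 0) := by
        refine Finset.sum_congr rfl fun y _ => ?_
        split_ifs <;> simp
    _ = ∑ y : Fin n → ZMod 2, I ^ codeWt y * ∑ u ∈ D, chi (∑ i, u i * y i) := by
        refine Finset.sum_congr rfl fun y _ => ?_
        rw [orth D hDadd y]
    _ = ∑ y : Fin n → ZMod 2, ∑ u ∈ D, I ^ codeWt y * chi (∑ i, u i * y i) := by
        refine Finset.sum_congr rfl fun y _ => ?_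
        rw [Finset.mul_sum]
    _ = ∑ u ∈ D, ∑ y : Fin n → ZMod 2, I ^ codeWt y * chi (∑ i, u i * y i) :=
        Finset.sum_comm
    _ = ∑ u ∈ D, (1 + I) ^ (n - codeWt u) * (1 - I) ^ codeWt u :=
        Finset.sum_congr rfl fun u _ => gauss u
    _ = ∑ u ∈ D, (1 + I) ^ n := by
        refine Finset.sum_congr rfl fun u hu => ?_
        have h4 : codeWt u % 4 = 0 := hwt u hu
        have h1 : (1 - I) ^ codeWt u = (1 + I) ^ codeWt u * (-I) ^ codeWt u := by
          rw [← mul_pow]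
          congr 1
          ring_nf
          rw [I_sq]
          ring
        rw [h1, Ipow_neg_of_mod4_eq_zero h4, mul_one, ← pow_add,
          Nat.sub_add_cancel (hwle u)]
    _ = (1 + I) ^ n * (D.card : ℂ) := by
        rw [Finset.sum_const, nsmul_eq_mul, mul_comm]

end ShadowAux

open Complex

theorem shadow_weight_div_four (n : ℕ) (hn : n % 8 = 0)
    (C : Submodule (ZMod 2) (Fin n → ZMod 2))
    (hsd : (C : Set (Fin n → ZMod 2)) = dualSet (C : Set (Fin n → ZMod 2)))
    (hse : ∃ x ∈ C, codeWt x % 4 = 2) :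
    ∀ y ∈ dualSet {x | x ∈ C ∧ 4 ∣ codeWt x} \ (C : Set (Fin n → ZMod 2)),
      4 ∣ codeWt y := by
  classical
  intro y₀ hy₀
  have hy₀dual : ∀ x, x ∈ C → 4 ∣ codeWt x → ∑ i, x i * y₀ i = 0 :=
    fun x h1 h2 => hy₀.1 x ⟨h1, h2⟩
  have hy₀C : y₀ ∉ (C : Set (Fin n → ZMod 2)) := hy₀.2
  -- self-orthogonality
  have horth : ∀ a ∈ C, ∀ b ∈ C, ∑ i, a i * b i = 0 := by
    intro a ha b hb
    have hb' : b ∈ dualSet (C : Set (Fin n → ZMod 2)) := hsd ▸ hb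
    exact hb' a ha
  -- all weights in C are even
  have heven : ∀ a, a ∈ C → codeWt a % 2 = 0 := by
    intro a ha
    have h := horth a ha a ha
    have hsq : ∀ c : ZMod 2, c * c = c := by decide
    rw [Finset.sum_congr rfl fun i _ => hsq (a i), ShadowAux.sum_entries] at h
    have := (ZMod.natCast_eq_zero_iff (codeWt a) 2).mp h
    omega
  -- the all-ones vector
  have heC : (fun _ => (1 : ZMod 2)) ∈ C := by
    have hmem : (fun _ => (1 : ZMod 2)) ∈ dualSet (C : Set (Fin n → ZMod 2)) := by
      intro x hx
      simp only [mul_one]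
      rw [ShadowAux.sum_entries]
      rw [ZMod.natCast_eq_zero_iff]
      have := heven x hx
      omega
    rw [← hsd] at hmem
    exact hmem
  have hwte : codeWt (fun _ : Fin n => (1 : ZMod 2)) = n := by
    rw [codeWt, Finset.filter_true_of_mem (fun i _ => by decide), Finset.card_univ,
      Fintype.card_fin]
  have h4e : 4 ∣ codeWt (fun _ : Fin n => (1 : ZMod 2)) := by rw [hwte]; omega
  -- y₀ has even weight
  have hy₀even : codeWt y₀ % 2 = 0 := by
    have h := hy₀dual _ heC h4e
    simp only [one_mul] at h
    rw [ShadowAux.sum_entries] at h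
    have := (ZMod.natCast_eq_zero_iff (codeWt y₀) 2).mp h
    omega
  obtain ⟨c₁, hc₁C, hc₁w⟩ := hse
  have hc₁4 : ¬ 4 ∣ codeWt c₁ := by omega
  have hz2 : ∀ a : ZMod 2, a ≠ 0 → a = 1 := by decide
  -- splitting dot products over sums
  have hsplit : ∀ a b s : Fin n → ZMod 2,
      ∑ i, (a + b) i * s i = (∑ i, a i * s i) + ∑ i, b i * s i := by
    intro a b s
    rw [← Finset.sum_add_distrib]
    exact Finset.sum_congr rfl fun i _ => by simp [add_mul]
  -- key: a shadow vector is non-orthogonal to every singly even codeword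
  have key : ∀ s : Fin n → ZMod 2,
      (∀ x, x ∈ C → 4 ∣ codeWt x → ∑ i, x i * s i = 0) →
      s ∉ (C : Set (Fin n → ZMod 2)) →
      ∀ x, x ∈ C → ¬ (4 ∣ codeWt x) → ∑ i, x i * s i ≠ 0 := by
    intro s hs hsC x hxC hx4 h0
    apply hsC
    have hmem : s ∈ dualSet (C : Set (Fin n → ZMod 2)) := by
      intro z hz
      by_cases h4z : 4 ∣ codeWt z
      · exact hs z hz h4z
      · have hz2' : codeWt z % 4 = 2 := by have := heven z hz; omega
        have hx2 : codeWt x % 4 = 2 := by have := heven x hxC; omega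
        have hov : ∑ i, x i * z i = 0 := horth x hxC z hz
        have hwadd := ShadowAux.wt_add x z
        have hovd := (ShadowAux.dot_zero_iff x z).mp hov
        have hxz4 : 4 ∣ codeWt (x + z) := by omega
        have h1 : ∑ i, (x + z) i * s i = 0 := hs (x + z) (C.add_mem hxC hz) hxz4
        have heq : ∑ i, z i * s i = (∑ i, (x + z) i * s i) + ∑ i, x i * s i := by
          rw [hsplit x z s, h0]
          ring
        rw [heq, h1, h0, add_zero]
    rw [← hsd] at hmem
    exact hmem
  -- weights mod 4 are constant on the shadow
  have hconst : ∀ z : Fin n → ZMod 2,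
      (∀ x, x ∈ C → 4 ∣ codeWt x → ∑ i, x i * z i = 0) →
      z ∉ (C : Set (Fin n → ZMod 2)) → codeWt z % 4 = codeWt y₀ % 4 := by
    intro z hz hzC
    set u := y₀ + z with hu
    have hu_dual : ∀ x, x ∈ C → 4 ∣ codeWt x → ∑ i, x i * u i = 0 := by
      intro x h1 h2
      have heq : ∑ i, x i * u i = (∑ i, x i * y₀ i) + ∑ i, x i * z i := by
        rw [← Finset.sum_add_distrib]
        exact Finset.sum_congr rfl fun i _ => by simp [hu, mul_add]
      rw [heq, hy₀dual x h1 h2, hz x h1 h2, add_zero]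
    have huC : u ∈ (C : Set (Fin n → ZMod 2)) := by
      by_contra huC
      have h1 := key y₀ hy₀dual hy₀C c₁ hc₁C hc₁4
      have h2 := key z hz hzC c₁ hc₁C hc₁4
      have h3 := key u hu_dual huC c₁ hc₁C hc₁4
      apply h3
      have heq : ∑ i, c₁ i * u i = (∑ i, c₁ i * y₀ i) + ∑ i, c₁ i * z i := by
        rw [← Finset.sum_add_distrib]
        exact Finset.sum_congr rfl fun i _ => by simp [hu, mul_add]
      rw [heq, hz2 _ h1, hz2 _ h2]
      decide
    have hz_eq : z = u + y₀ := by
      funext i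
      have : ∀ a b : ZMod 2, (a + b) + a = b := by decide
      simp [hu, this]
    rw [hz_eq]
    by_cases h4u : 4 ∣ codeWt u
    · exact ShadowAux.wt_add_mod4_e (by omega) (hy₀dual u huC h4u)
    · have hu2 : codeWt u % 4 = 2 := by have := heven u huC; omega
      exact ShadowAux.wt_add_mod4_o hu2 (key y₀ hy₀dual hy₀C u huC h4u)
  -- finite sets
  set D : Finset (Fin n → ZMod 2) := univ.filter (fun x => x ∈ C ∧ 4 ∣ codeWt x) with hD
  set Cf : Finset (Fin n → ZMod 2) := univ.filter (fun x => x ∈ C) with hCf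
  set C1f : Finset (Fin n → ZMod 2) :=
    univ.filter (fun x => x ∈ C ∧ ¬ 4 ∣ codeWt x) with hC1f
  have hwt4 : ∀ a b : Fin n → ZMod 2, a ∈ C → b ∈ C →
      codeWt (a + b) % 4 = (codeWt a + codeWt b) % 4 := by
    intro a b ha hb
    have h1 := ShadowAux.wt_add a b
    have h2 := (ShadowAux.dot_zero_iff a b).mp (horth a ha b hb)
    omega
  have hDadd : ∀ a ∈ D, ∀ b ∈ D, a + b ∈ D := by
    intro a ha b hb
    rw [hD, Finset.mem_filter] at ha hb ⊢
    obtain ⟨-, ha1, ha2⟩ := ha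
    obtain ⟨-, hb1, hb2⟩ := hb
    refine ⟨Finset.mem_univ _, C.add_mem ha1 hb1, ?_⟩
    have := hwt4 a b ha1 hb1
    omega
  have hwtD : ∀ x ∈ D, codeWt x % 4 = 0 := by
    intro x hx
    rw [hD, Finset.mem_filter] at hx
    omega
  have h0D : (0 : Fin n → ZMod 2) ∈ D := by
    rw [hD, Finset.mem_filter]
    refine ⟨Finset.mem_univ _, C.zero_mem, ?_⟩
    have : codeWt (0 : Fin n → ZMod 2) = 0 := by simp [codeWt]
    rw [this]
    exact dvd_zero 4
  have hcard0 : ((D.card : ℂ)) ≠ 0 := by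
    rw [Nat.cast_ne_zero]
    exact Finset.card_ne_zero_of_mem h0D
  set Fil : Finset (Fin n → ZMod 2) :=
    univ.filter (fun y => ∀ x ∈ D, ∑ i, x i * y i = 0) with hFil
  have hmain : ∑ y ∈ Fil, I ^ codeWt y = (1 + I) ^ n :=
    mul_right_cancel₀ hcard0 (ShadowAux.poisson D hDadd hwtD)
  -- C ⊆ Fil
  have hCfFil : Cf ⊆ Fil := by
    intro x hx
    rw [hCf, Finset.mem_filter] at hx
    rw [hFil, Finset.mem_filter]
    refine ⟨Finset.mem_univ _, fun u hu => ?_⟩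
    rw [hD, Finset.mem_filter] at hu
    exact horth u hu.2.1 x hx.2
  -- the sum over C vanishes
  have hdisj : Disjoint D C1f := by
    rw [Finset.disjoint_left]
    intro a ha hb
    rw [hD, Finset.mem_filter] at ha
    rw [hC1f, Finset.mem_filter] at hb
    exact hb.2.2 ha.2.2
  have hunion : D ∪ C1f = Cf := by
    ext a
    rw [Finset.mem_union, hD, hC1f, hCf, Finset.mem_filter, Finset.mem_filter,
      Finset.mem_filter]
    constructor
    · rintro (h | h) <;> exact ⟨h.1, h.2.1⟩
    · rintro ⟨h1, h2⟩
      by_cases h4 : 4 ∣ codeWt a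
      · exact Or.inl ⟨h1, h2, h4⟩
      · exact Or.inr ⟨h1, h2, h4⟩
  have hcards : D.card = C1f.card := by
    refine Finset.card_bij' (fun x _ => x + c₁) (fun x _ => x + c₁) ?_ ?_ ?_ ?_
    · intro x hx
      rw [hD, Finset.mem_filter] at hx
      rw [hC1f, Finset.mem_filter]
      refine ⟨Finset.mem_univ _, C.add_mem hx.2.1 hc₁C, ?_⟩
      have := hwt4 x c₁ hx.2.1 hc₁C
      have h4x : 4 ∣ codeWt x := hx.2.2
      omega
    · intro x hx
      rw [hC1f, Finset.mem_filter] at hx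
      rw [hD, Finset.mem_filter]
      refine ⟨Finset.mem_univ _, C.add_mem hx.2.1 hc₁C, ?_⟩
      have := hwt4 x c₁ hx.2.1 hc₁C
      have hx2 : codeWt x % 4 = 2 := by
        have := heven x hx.2.1
        have := hx.2.2
        omega
      omega
    · intro x _
      funext i
      have : ∀ a b : ZMod 2, a + b + b = a := by decide
      simp [this]
    · intro x _
      funext i
      have : ∀ a b : ZMod 2, a + b + b = a := by decide
      simp [this]
  have hsumD : ∑ y ∈ D, I ^ codeWt y = (D.card : ℂ) := by
    rw [Finset.sum_congr rfl fun y hy => ShadowAux.Ipow_of_mod4_eq_zero (hwtD y hy)]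
    simp
  have hsumC1 : ∑ y ∈ C1f, I ^ codeWt y = -(C1f.card : ℂ) := by
    have h2 : ∀ y ∈ C1f, I ^ codeWt y = -1 := by
      intro y hy
      rw [hC1f, Finset.mem_filter] at hy
      refine ShadowAux.Ipow_of_mod4_eq_two ?_
      have := heven y hy.2.1
      have := hy.2.2
      omega
    rw [Finset.sum_congr rfl h2]
    simp
  have hsumCf : ∑ y ∈ Cf, I ^ codeWt y = 0 := by
    rw [← hunion, Finset.sum_union hdisj, hsumD, hsumC1, hcards]
    ring
  -- the shadow sum
  have hshadow : ∑ y ∈ Fil \ Cf, I ^ codeWt y = (1 + I) ^ n := by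
    have h := Finset.sum_sdiff (f := fun y => I ^ codeWt y) hCfFil
    rw [hsumCf, add_zero] at h
    rw [h, hmain]
  -- (1+I)^n = 16^(n/8)
  obtain ⟨m, hm⟩ : ∃ m, n = 8 * m := ⟨n / 8, by omega⟩
  have h8 : (1 + I) ^ 8 = 16 := by
    have h2 : (1 + I) ^ 2 = 2 * I := by
      linear_combination Complex.I_sq
    rw [show (8 : ℕ) = 2 * 4 from rfl, pow_mul, h2, mul_pow, I_pow_four]
    norm_num
  have hval : (1 + I) ^ n = (16 : ℂ) ^ m := by
    rw [hm, pow_mul, h8]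
  -- conclude
  suffices hsuff : codeWt y₀ % 4 ≠ 2 by omega
  intro hy2
  have hall : ∀ z ∈ Fil \ Cf, I ^ codeWt z = -1 := by
    intro z hzmem
    rw [Finset.mem_sdiff] at hzmem
    obtain ⟨hz1, hz2'⟩ := hzmem
    rw [hFil, Finset.mem_filter] at hz1
    have hzC : z ∉ (C : Set (Fin n → ZMod 2)) := by
      intro hc
      exact hz2' (by rw [hCf, Finset.mem_filter]; exact ⟨Finset.mem_univ _, hc⟩)
    have hzdual : ∀ x, x ∈ C → 4 ∣ codeWt x → ∑ i, x i * z i = 0 := by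
      intro x h1 h2
      exact hz1.2 x (by rw [hD, Finset.mem_filter]; exact ⟨Finset.mem_univ _, h1, h2⟩)
    have := hconst z hzdual hzC
    exact ShadowAux.Ipow_of_mod4_eq_two (by omega)
  have hneg : ∑ z ∈ Fil \ Cf, I ^ codeWt z = -(((Fil \ Cf).card : ℂ)) := by
    rw [Finset.sum_congr rfl hall]
    simp
  rw [hneg, hval] at hshadow
  have hnat : ((((Fil \ Cf).card + 16 ^ m : ℕ)) : ℂ) = 0 := by
    push_cast
    linear_combination -hshadow
  have h0 : (Fil \ Cf).card + 16 ^ m = 0 := Nat.cast_eq_zero.mp hnat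
  have hpos : 0 < 16 ^ m := Nat.pow_pos (by norm_num)
  omega
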